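/- Let K be a field, let A be a d × n integer matrix, and let b_1, ..., b_m ∈ ℤ^n satisfy A b_i = 0 for all i. Write each b_i = b_i^+ − b_i^− with b_i^+, b_i^− ∈ ℕ^n having disjoint supports. Then the following are equivalent: (1) b_1, ..., b_m form a Markov basis for A, i.e., for any u, v ∈ ℕ^n with A u = A v there is a finite sequence u = w_0, w_1, ..., w_N = v with every w_j ∈ ℕ^n and every difference w_{j+1} − w_j equal to b_i or −b_i for some i; (2) the binomials p^{b_i^+} − p^{b_i^−}, for 1 ≤ i ≤ m, generate the toric ideal I_A in the polynomial ring K[p_1, ..., p_n]. -/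

import Mathlib

open MvPolynomial

namespace MarkovAux

variable {K : Type*} [Field K] {n m : ℕ}

/-- exponent finsupp of a function -/
noncomputable def ef (w : Fin n → ℕ) : Fin n →₀ ℕ := Finsupp.equivFunOnFinite.symm w

lemma ef_apply (w : Fin n → ℕ) (l : Fin n) : ef w l = w l := rfl

lemma ef_add (p q : Fin n → ℕ) : ef (fun l => p l + q l) = ef p + ef q := by
  ext l; simp [ef_apply]

lemma Mo_eq (w : Fin n → ℕ) :
    (∏ l, X l ^ w l : MvPolynomial (Fin n) K) = monomial (ef w) 1 := by
  rw [monomial_eq, C_1, one_mul, Finsupp.prod_fintype]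
  · rfl
  · intro i; exact pow_zero _

/-- single Markov move -/
def Move (b : Fin m → Fin n → ℤ) (x y : Fin n → ℕ) : Prop :=
  ∃ i, (fun l => (y l : ℤ) - x l) = b i ∨ (fun l => (y l : ℤ) - x l) = -(b i)

lemma Move.symm {b : Fin m → Fin n → ℤ} {x y : Fin n → ℕ} (h : Move b x y) :
    Move b y x := by
  obtain ⟨i, h | h⟩ := h
  · exact ⟨i, Or.inr (by funext l; have := congrFun h l; simp only [Pi.neg_apply]; linarith)⟩
  · exact ⟨i, Or.inl (by funext l; have := congrFun h l; simp only [Pi.neg_apply] at this; linarith)⟩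

lemma path_iff_rtg (b : Fin m → Fin n → ℤ) (u v : Fin n → ℕ) :
    (∃ (N : ℕ) (w : ℕ → Fin n → ℕ), w 0 = u ∧ w N = v ∧
      ∀ j < N, Move b (w j) (w (j+1)))
    ↔ Relation.ReflTransGen (Move b) u v := by
  constructor
  · rintro ⟨N, w, rfl, rfl, hs⟩
    induction N with
    | zero => exact Relation.ReflTransGen.refl
    | succ N ih =>
      exact (ih (fun j hj => hs j (Nat.lt_succ_of_lt hj))).tail (hs N (Nat.lt_succ_self N))
  · intro h
    induction h with
    | refl => exact ⟨0, fun _ => u, rfl, rfl, fun j hj => absurd hj (Nat.not_lt_zero j)⟩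
    | @tail c v hc hmv ih =>
      obtain ⟨N, w, h0, hN, hs⟩ := ih
      refine ⟨N + 1, fun j => if j ≤ N then w j else v, by simpa using h0, by simp, ?_⟩
      intro j hj
      rcases Nat.lt_or_ge j N with hjN | hjN
      · simpa [Nat.le_of_lt hjN, Nat.succ_le_of_lt hjN] using hs j hjN
      · have hjN' : j = N := Nat.le_antisymm (Nat.lt_succ_iff.mp hj) hjN
        subst hjN'
        simpa [hN] using hmv

/-- a single move gives a binomial in the span of the generator binomials -/
lemma move_mem (b : Fin m → Fin n → ℤ) {x y : Fin n → ℕ} (h : Move b x y) :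
    ((∏ l, X l ^ x l) - (∏ l, X l ^ y l) : MvPolynomial (Fin n) K) ∈
      Ideal.span (Set.range fun i : Fin m =>
        (∏ l, X l ^ (b i l).toNat : MvPolynomial (Fin n) K)
          - ∏ l, X l ^ (-(b i l)).toNat) := by
  -- helper for the case y - x = b i
  have key : ∀ (x y : Fin n → ℕ) (i : Fin m),
      (fun l => (y l : ℤ) - x l) = b i →
      ((∏ l, X l ^ x l) - (∏ l, X l ^ y l) : MvPolynomial (Fin n) K) ∈
        Ideal.span (Set.range fun i : Fin m =>
          (∏ l, X l ^ (b i l).toNat : MvPolynomial (Fin n) K)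
            - ∏ l, X l ^ (-(b i l)).toNat) := by
    intro x y i h
    set a : Fin n → ℕ := fun l => x l - (-(b i l)).toNat with ha
    have hx : x = fun l => a l + (-(b i l)).toNat := by
      funext l; have := congrFun h l; simp only [ha]; omega
    have hy : y = fun l => a l + (b i l).toNat := by
      funext l; have := congrFun h l; simp only [ha]; omega
    have hxm : (∏ l, X l ^ x l : MvPolynomial (Fin n) K)
        = monomial (ef a + ef fun l => (-(b i l)).toNat) 1 := by
      rw [hx, Mo_eq, ef_add]
    have hym : (∏ l, X l ^ y l : MvPolynomial (Fin n) K)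
        = monomial (ef a + ef fun l => (b i l).toNat) 1 := by
      rw [hy, Mo_eq, ef_add]
    have hmem : ((∏ l, X l ^ (b i l).toNat : MvPolynomial (Fin n) K)
          - ∏ l, X l ^ (-(b i l)).toNat) ∈
        Ideal.span (Set.range fun i : Fin m =>
          (∏ l, X l ^ (b i l).toNat : MvPolynomial (Fin n) K)
            - ∏ l, X l ^ (-(b i l)).toNat) :=
      Ideal.subset_span ⟨i, rfl⟩
    have : ((∏ l, X l ^ x l) - (∏ l, X l ^ y l) : MvPolynomial (Fin n) K)
        = -(monomial (ef a) 1 * ((∏ l, X l ^ (b i l).toNat : MvPolynomial (Fin n) K)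
            - ∏ l, X l ^ (-(b i l)).toNat)) := by
      rw [hxm, hym, Mo_eq, Mo_eq, mul_sub, monomial_mul, monomial_mul, mul_one]
      ring
    rw [this]
    exact neg_mem (Ideal.mul_mem_left _ _ hmem)
  obtain ⟨i, hc | hc⟩ := h
  · exact key x y i hc
  · have hc' : (fun l => (x l : ℤ) - y l) = b i := by
      funext l
      have h1 := congrFun hc l
      simp only [Pi.neg_apply] at h1
      linarith
    have := key y x i hc'
    have h2 : ((∏ l, X l ^ x l) - (∏ l, X l ^ y l) : MvPolynomial (Fin n) K)
        = -((∏ l, X l ^ y l) - (∏ l, X l ^ x l)) := by ring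
    rw [h2]
    exact neg_mem this

section Lsum

variable (P : (Fin n →₀ ℕ) → Prop) [DecidablePred P]

noncomputable def Lsum (f : MvPolynomial (Fin n) K) : K :=
  ∑ e ∈ f.support, if P e then coeff e f else 0

lemma Lsum_superset {f : MvPolynomial (Fin n) K} {S : Finset (Fin n →₀ ℕ)}
    (hS : f.support ⊆ S) :
    Lsum P f = ∑ e ∈ S, if P e then coeff e f else 0 := by
  refine Finset.sum_subset hS ?_
  intro e _ he
  rw [MvPolynomial.notMem_support_iff.mp he]
  simp

lemma Lsum_add (f g : MvPolynomial (Fin n) K) :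
    Lsum P (f + g) = Lsum P f + Lsum P g := by
  rw [Lsum_superset P (S := f.support ∪ g.support) MvPolynomial.support_add,
    Lsum_superset P (S := f.support ∪ g.support) Finset.subset_union_left,
    Lsum_superset P (S := f.support ∪ g.support) Finset.subset_union_right,
    ← Finset.sum_add_distrib]
  refine Finset.sum_congr rfl fun e _ => ?_
  rw [coeff_add]
  split <;> simp

lemma Lsum_zero : Lsum P (0 : MvPolynomial (Fin n) K) = 0 := by
  simp [Lsum]

lemma Lsum_monomial (e : Fin n →₀ ℕ) (c : K) :
    Lsum P (monomial e c) = if P e then c else 0 := by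
  classical
  by_cases hc : c = 0
  · simp [hc, Lsum_zero]
  · rw [Lsum, support_monomial, if_neg hc, Finset.sum_singleton, coeff_monomial, if_pos rfl]

lemma Lsum_neg (f : MvPolynomial (Fin n) K) : Lsum P (-f) = -Lsum P f := by
  rw [Lsum, Lsum, support_neg, ← Finset.sum_neg_distrib]
  refine Finset.sum_congr rfl fun e _ => ?_
  rw [coeff_neg]
  split <;> simp

lemma Lsum_sub (f g : MvPolynomial (Fin n) K) :
    Lsum P (f - g) = Lsum P f - Lsum P g := by
  rw [sub_eq_add_neg, Lsum_add, Lsum_neg, sub_eq_add_neg]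

lemma Lsum_mul_binomial (s t : Fin n →₀ ℕ) (hP : ∀ e, P (e + s) ↔ P (e + t))
    (a : MvPolynomial (Fin n) K) :
    Lsum P (a * (monomial s 1 - monomial t 1)) = 0 := by
  induction a using MvPolynomial.induction_on' with
  | monomial e c =>
    rw [mul_sub, monomial_mul, monomial_mul, mul_one, Lsum_sub, Lsum_monomial, Lsum_monomial]
    by_cases h : P (e + s)
    · rw [if_pos h, if_pos ((hP e).mp h), sub_self]
    · rw [if_neg h, if_neg (fun h' => h ((hP e).mpr h')), sub_self]
  | add p q hp hq =>
    rw [add_mul, Lsum_add, hp, hq, add_zero]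

end Lsum

end MarkovAux

open MarkovAux

/-- **Diaconis–Sturmfels / fundamental theorem of Markov bases.**
Integer vectors `b_1, …, b_m` in the kernel of `A` form a Markov basis
(connecting any two nonnegative integer vectors with the same sufficient
statistics `A u = A v` by moves `± b_i` staying in `ℕⁿ`) if and only if the
binomials `p^{b_i⁺} - p^{b_i⁻}` generate the toric ideal `I_A` of `A`. -/
theorem markov_basis_iff_binomials_generate_toric_ideal
    (K : Type*) [Field K] (d n m : ℕ)
    (A : Matrix (Fin d) (Fin n) ℤ)
    (b : Fin m → (Fin n → ℤ))
    (hb : ∀ i, A.mulVec (b i) = 0) :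
    (∀ u v : Fin n → ℕ,
        A.mulVec (fun j => (u j : ℤ)) = A.mulVec (fun j => (v j : ℤ)) →
        ∃ (N : ℕ) (w : ℕ → Fin n → ℕ), w 0 = u ∧ w N = v ∧
          ∀ j < N, ∃ i : Fin m,
            (fun l => ((w (j + 1) l : ℤ) - (w j l : ℤ))) = b i ∨
            (fun l => ((w (j + 1) l : ℤ) - (w j l : ℤ))) = -(b i))
    ↔
    Ideal.span (Set.range fun i : Fin m =>
        (∏ l, X l ^ (b i l).toNat : MvPolynomial (Fin n) K)
          - ∏ l, X l ^ (-(b i l)).toNat)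
      = Ideal.span {f : MvPolynomial (Fin n) K | ∃ u v : Fin n → ℕ,
          A.mulVec (fun j => (u j : ℤ)) = A.mulVec (fun j => (v j : ℤ)) ∧
          f = ∏ l, X l ^ u l - ∏ l, X l ^ v l} := by
  classical
  constructor
  · -- Markov basis ⇒ ideals equal
    intro hMarkov
    apply le_antisymm
    · rw [Ideal.span_le]
      rintro _ ⟨i, rfl⟩
      refine Ideal.subset_span ⟨fun l => (b i l).toNat, fun l => (-(b i l)).toNat, ?_, rfl⟩
      have h1 : (fun j => (((b i j).toNat : ℕ) : ℤ))
          - (fun j => (((-(b i j)).toNat : ℕ) : ℤ)) = b i := by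
        funext l; simp only [Pi.sub_apply]; omega
      have h2 := congrArg A.mulVec h1
      rw [Matrix.mulVec_sub, hb i, sub_eq_zero] at h2
      exact h2
    · rw [Ideal.span_le]
      rintro _ ⟨u, v, hA, rfl⟩
      have hconn : Relation.ReflTransGen (Move b) u v :=
        (path_iff_rtg b u v).mp (hMarkov u v hA)
      clear hA
      induction hconn with
      | refl => simp
      | @tail c v' hc hmv ih =>
        have h1 : ((∏ l, X l ^ u l) - (∏ l, X l ^ v' l) : MvPolynomial (Fin n) K)
            = ((∏ l, X l ^ u l) - (∏ l, X l ^ c l))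
              + ((∏ l, X l ^ c l) - (∏ l, X l ^ v' l)) := by ring
        rw [h1]
        exact add_mem ih (move_mem b hmv)
  · -- ideals equal ⇒ Markov basis
    intro hspan u v hA
    suffices hgoal : Relation.ReflTransGen (Move b) u v by
      exact (path_iff_rtg b u v).mpr hgoal
    have hmem : ((∏ l, X l ^ u l) - (∏ l, X l ^ v l) : MvPolynomial (Fin n) K) ∈
        Ideal.span (Set.range fun i : Fin m =>
          (∏ l, X l ^ (b i l).toNat : MvPolynomial (Fin n) K)
            - ∏ l, X l ^ (-(b i l)).toNat) := by
      rw [hspan]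
      exact Ideal.subset_span ⟨u, v, hA, rfl⟩
    obtain ⟨c, hc⟩ := (Submodule.mem_span_range_iff_exists_fun _).mp hmem
    set P : (Fin n →₀ ℕ) → Prop :=
      fun e => Relation.ReflTransGen (Move b) u (fun l => e l) with hP
    have hsat : ∀ i : Fin m, ∀ e : Fin n →₀ ℕ,
        P (e + ef fun l => (b i l).toNat) ↔ P (e + ef fun l => (-(b i l)).toNat) := by
      intro i e
      have hmv : Move b (fun l => (e + ef fun l => (b i l).toNat) l)
          (fun l => (e + ef fun l => (-(b i l)).toNat) l) := by
        refine ⟨i, Or.inr ?_⟩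
        funext l
        simp only [Finsupp.add_apply, Pi.neg_apply]
        rw [ef_apply, ef_apply]
        push_cast
        omega
      exact ⟨fun h => h.tail hmv, fun h => h.tail hmv.symm⟩
    have hL : Lsum P ((∏ l, X l ^ u l) - (∏ l, X l ^ v l) : MvPolynomial (Fin n) K) = 0 := by
      rw [← hc]
      have hrw : (∑ i, c i • ((∏ l, X l ^ (b i l).toNat : MvPolynomial (Fin n) K)
            - ∏ l, X l ^ (-(b i l)).toNat))
          = ∑ i, c i * ((monomial (ef fun l => (b i l).toNat) 1
            - monomial (ef fun l => (-(b i l)).toNat) 1) : MvPolynomial (Fin n) K) := by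
        refine Finset.sum_congr rfl fun i _ => ?_
        rw [smul_eq_mul, Mo_eq, Mo_eq]
      rw [hrw]
      induction (Finset.univ : Finset (Fin m)) using Finset.induction_on with
      | empty => simpa using Lsum_zero P
      | insert _ _ hx ih =>
        rw [Finset.sum_insert hx, Lsum_add, ih, Lsum_mul_binomial P _ _ (hsat _), add_zero]
    rw [Mo_eq, Mo_eq, Lsum_sub, Lsum_monomial, Lsum_monomial] at hL
    have hPu : P (ef u) := Relation.ReflTransGen.refl
    rw [if_pos hPu] at hL
    by_cases hPv : P (ef v)
    · exact hPv
    · rw [if_neg hPv, sub_zero] at hL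
      exact absurd hL one_ne_zero
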